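/- arXiv:2204.00524 — 4 statements merged into one kernel-verified Lean document; each statement's English description precedes it below -/
import Mathlib

section
/- Let A = P^{(1)} + ⋯ + P^{(d)} be the sum of d ≥ 1 independent uniformly random n×n permutation matrices. Then for every z ∈ ℂ, the expectation of the characteristic-type determinant satisfies E[det(I_n − z·A)] = 1 − d·z. -/
open Finset

/-- Expectation of a complex random variable under the uniform distribution on a finite type. -/
noncomputable def expectC {α : Type*} [Fintype α] (f : α → ℂ) : ℂ :=
  (∑ a, f a) / Fintype.card α

/-- The permutation matrix of `π`, with complex entries: `P i j = 1` iff `π i = j`. -/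
noncomputable def permMatrixC (n : ℕ) (π : Equiv.Perm (Fin n)) : Matrix (Fin n) (Fin n) ℂ :=
  fun i j => if π i = j then 1 else 0

/-- The sum `A = P⁽¹⁾ + ⋯ + P⁽ᵈ⁾` of the permutation matrices of `σ 0, …, σ (d-1)`. -/
noncomputable def sumPermC (n d : ℕ) (σ : Fin d → Equiv.Perm (Fin n)) :
    Matrix (Fin n) (Fin n) ℂ :=
  ∑ q : Fin d, permMatrixC n (σ q)

open Equiv


lemma card_fix (n : ℕ) (U : Finset (Fin n)) :
    (Finset.univ.filter (fun ρ : Perm (Fin n) => ∀ i ∈ U, ρ i = i)).card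
      = (n - U.card).factorial := by
  have e1 : {ρ : Perm (Fin n) // ∀ i ∈ U, ρ i = i} ≃ Perm {x : Fin n // x ∉ U} := by
    refine Equiv.symm ?_
    refine (Equiv.Perm.subtypeEquivSubtypePerm (fun x => x ∉ U)).trans ?_
    exact Equiv.subtypeEquivRight (fun ρ => by simp)
  have h2 := Fintype.card_congr e1
  rw [Fintype.card_perm] at h2
  have hcard : Fintype.card {x : Fin n // x ∉ U} = n - U.card := by
    simp [Fintype.card_subtype_compl, Fintype.card_fin]
  rw [hcard] at h2
  rw [← h2, Fintype.card_subtype]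

lemma countA (n : ℕ) (τ : Perm (Fin n)) (U : Finset (Fin n)) :
    ∑ π : Perm (Fin n), ∏ i ∈ U, (if π (τ i) = i then (1:ℂ) else 0)
      = (n - U.card).factorial := by
  have h1 : ∀ π : Perm (Fin n),
      ∏ i ∈ U, (if π (τ i) = i then (1:ℂ) else 0)
        = if ∀ i ∈ U, (π * τ) i = i then 1 else 0 := by
    intro π; rw [Finset.prod_boole]; split_ifs with h1 h2 <;> simp only [Equiv.Perm.mul_apply] at * <;> tauto
  simp only [h1]
  have h2 : (∑ π : Perm (Fin n), if ∀ i ∈ U, (π * τ) i = i then (1:ℂ) else 0)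
      = ∑ ρ : Perm (Fin n), if ∀ i ∈ U, ρ i = i then (1:ℂ) else 0 := by
    refine (Fintype.sum_equiv (Equiv.mulRight τ⁻¹)
      (fun ρ => if ∀ i ∈ U, ρ i = i then (1:ℂ) else 0)
      (fun π => if ∀ i ∈ U, (π * τ) i = i then (1:ℂ) else 0) ?_).symm
    intro ρ; simp [Equiv.mulRight]
  rw [h2, Finset.sum_boole, card_fix]


lemma signsum_ge2 (n : ℕ) (S : Finset (Fin n)) (h : 2 ≤ S.card) :
    ∑ τ : Perm (Fin n), (if ∀ i ∉ S, τ i = i then ((Equiv.Perm.sign τ : ℤ) : ℂ) else 0) = 0 := by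
  obtain ⟨a, ha, b, hb, hab⟩ := Finset.one_lt_card.mp h
  have hcond : ∀ τ : Perm (Fin n),
      (∀ i ∉ S, (Equiv.swap a b * τ) i = i) ↔ (∀ i ∉ S, τ i = i) := by
    intro τ
    constructor
    · intro H i hi
      have h1 := H i hi
      rw [Equiv.Perm.mul_apply] at h1
      have h2 : τ i = Equiv.swap a b i := by
        have := congrArg (Equiv.swap a b) h1
        rwa [Equiv.swap_apply_self] at this
      rw [h2, Equiv.swap_apply_of_ne_of_ne
        (fun h => hi (by rw [h]; exact ha)) (fun h => hi (by rw [h]; exact hb))]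
    · intro H i hi
      rw [Equiv.Perm.mul_apply, H i hi, Equiv.swap_apply_of_ne_of_ne
        (fun h => hi (by rw [h]; exact ha)) (fun h => hi (by rw [h]; exact hb))]
  have key : ∀ τ : Perm (Fin n),
      (if ∀ i ∉ S, (Equiv.swap a b * τ) i = i
        then ((Equiv.Perm.sign (Equiv.swap a b * τ) : ℤ) : ℂ) else 0)
      = - (if ∀ i ∉ S, τ i = i then ((Equiv.Perm.sign τ : ℤ) : ℂ) else 0) := by
    intro τ
    rw [if_congr (hcond τ) rfl rfl]
    by_cases hc : ∀ i ∉ S, τ i = i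
    · rw [if_pos hc, if_pos hc]
      rw [Equiv.Perm.sign_mul, Equiv.Perm.sign_swap hab]
      push_cast
      ring
    · simp [hc]
  have h2 : (∑ τ : Perm (Fin n), if ∀ i ∉ S, τ i = i then ((Equiv.Perm.sign τ : ℤ) : ℂ) else 0)
      = ∑ τ : Perm (Fin n),
          (if ∀ i ∉ S, (Equiv.swap a b * τ) i = i
            then ((Equiv.Perm.sign (Equiv.swap a b * τ) : ℤ) : ℂ) else 0) :=
    (Fintype.sum_equiv (Equiv.mulLeft (Equiv.swap a b)) _ _ (fun τ => rfl)).symm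
  simp only [key] at h2
  rw [Finset.sum_neg_distrib] at h2
  have h4 : (2:ℂ) * ∑ τ : Perm (Fin n),
      (if ∀ i ∉ S, τ i = i then ((Equiv.Perm.sign τ : ℤ) : ℂ) else 0) = 0 := by
    linear_combination h2
  have h3 := mul_eq_zero.mp h4
  simpa using h3

lemma signsum_le1 (n : ℕ) (S : Finset (Fin n)) (h : S.card ≤ 1) :
    ∑ τ : Perm (Fin n), (if ∀ i ∉ S, τ i = i then ((Equiv.Perm.sign τ : ℤ) : ℂ) else 0) = 1 := by
  have hcond : ∀ τ : Perm (Fin n), (∀ i ∉ S, τ i = i) ↔ τ = 1 := by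
    intro τ
    constructor
    · intro H
      refine Equiv.Perm.ext fun i => ?_
      simp only [Equiv.Perm.one_apply]
      by_contra hne
      have hi : i ∈ S := by by_contra hi; exact hne (H i hi)
      have hτi : τ i ∈ S := by
        by_contra hj
        have h5 := H _ hj
        exact hne (τ.injective h5 ▸ h5)
      have h2 : ({i, τ i} : Finset (Fin n)) ⊆ S := by
        intro x hx; simp at hx; rcases hx with h|h <;> simp [h, hi, hτi]
      have h6 : ({i, τ i} : Finset (Fin n)).card = 2 := by
        rw [Finset.card_insert_of_notMem (by simpa using (fun h => hne h.symm)),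
          Finset.card_singleton]
      have := Finset.card_le_card h2
      omega
    · intro H; subst H; simp
  simp only [hcond]
  rw [Finset.sum_ite_eq' Finset.univ (1 : Perm (Fin n))
    (fun τ => ((Equiv.Perm.sign τ : ℤ) : ℂ))]
  simp

lemma step_sigma (n d : ℕ) (z : ℂ) (τ : Perm (Fin n)) (g : Fin n → Option (Fin d)) :
    ∑ σ : Fin d → Perm (Fin n), ∏ i : Fin n,
      ((g i).elim (if τ i = i then (1:ℂ) else 0)
        (fun q => -z * (if σ q (τ i) = i then 1 else 0)))
    = (if ∀ i, g i = none → τ i = i then 1 else 0)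
      * ∏ q : Fin d, ((-z) ^ (univ.filter (fun i => g i = some q)).card
          * (n - (univ.filter (fun i => g i = some q)).card).factorial) := by
  have split : ∀ σ : Fin d → Perm (Fin n),
      (∏ i : Fin n, ((g i).elim (if τ i = i then (1:ℂ) else 0)
        (fun q => -z * (if σ q (τ i) = i then 1 else 0))))
      = (∏ i ∈ univ.filter (fun i => g i = none), (if τ i = i then (1:ℂ) else 0))
        * ∏ q : Fin d, ∏ i ∈ univ.filter (fun i => g i = some q),
            (-z * (if σ q (τ i) = i then (1:ℂ) else 0)) := by
    intro σ
    rw [← Finset.prod_fiberwise univ g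
      (fun i => (g i).elim (if τ i = i then (1:ℂ) else 0)
        (fun q => -z * (if σ q (τ i) = i then 1 else 0))),
      Fintype.prod_option]
    congr 1
    · refine Finset.prod_congr rfl fun i hi => ?_
      rw [Finset.mem_filter] at hi
      rw [hi.2]
      rfl
    · refine Finset.prod_congr rfl fun q _ => ?_
      refine Finset.prod_congr rfl fun i hi => ?_
      rw [Finset.mem_filter] at hi
      rw [hi.2]
      rfl
  simp only [split]
  rw [← Finset.mul_sum]
  congr 1
  · rw [Finset.prod_boole]
    congr 1
    simp only [Finset.mem_filter, Finset.mem_univ, true_and, eq_iff_iff]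
  · have h1 : (∑ σ : Fin d → Perm (Fin n), ∏ q : Fin d,
        ∏ i ∈ univ.filter (fun i => g i = some q), (-z * (if σ q (τ i) = i then (1:ℂ) else 0)))
        = ∏ q : Fin d, ∑ π : Perm (Fin n),
            ∏ i ∈ univ.filter (fun i => g i = some q), (-z * (if π (τ i) = i then (1:ℂ) else 0)) := by
      rw [Finset.prod_univ_sum (fun _ : Fin d => (univ : Finset (Perm (Fin n))))
        (fun q π => ∏ i ∈ univ.filter (fun i => g i = some q),
          (-z * (if π (τ i) = i then (1:ℂ) else 0)))]
      rw [Fintype.piFinset_univ]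
    rw [h1]
    refine Finset.prod_congr rfl fun q _ => ?_
    have h2 : ∀ π : Perm (Fin n),
        (∏ i ∈ univ.filter (fun i => g i = some q), (-z * (if π (τ i) = i then (1:ℂ) else 0)))
        = (-z) ^ (univ.filter (fun i => g i = some q)).card
            * ∏ i ∈ univ.filter (fun i => g i = some q), (if π (τ i) = i then (1:ℂ) else 0) := by
      intro π
      rw [Finset.prod_mul_distrib, Finset.prod_const]
    simp only [h2]
    rw [← Finset.mul_sum, countA]

-- W g abbreviation
noncomputable def Wg (n d : ℕ) (z : ℂ) (g : Fin n → Option (Fin d)) : ℂ :=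
  ∏ q : Fin d, ((-z) ^ (univ.filter (fun i => g i = some q)).card
      * (n - (univ.filter (fun i => g i = some q)).card).factorial)

lemma bigsum (n d : ℕ) (z : ℂ) :
    ∑ σ : Fin d → Perm (Fin n), (1 - z • sumPermC n d σ).det
    = ∑ g : Fin n → Option (Fin d), Wg n d z g *
        ∑ τ : Perm (Fin n),
          (if ∀ i ∉ univ.filter (fun i => g i ≠ none), τ i = i
            then ((Equiv.Perm.sign τ : ℤ) : ℂ) else 0) := by
  have entry : ∀ (σ : Fin d → Perm (Fin n)) (τ : Perm (Fin n)) (i : Fin n),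
      (1 - z • sumPermC n d σ) (τ i) i
        = ∑ t : Option (Fin d), (t.elim (if τ i = i then (1:ℂ) else 0)
            (fun q => -z * (if σ q (τ i) = i then 1 else 0))) := by
    intro σ τ i
    rw [Fintype.sum_option]
    simp only [Option.elim_none, Option.elim_some, Matrix.sub_apply, Matrix.one_apply,
      Matrix.smul_apply, sumPermC, Matrix.sum_apply, permMatrixC, smul_eq_mul,
      Finset.mul_sum, neg_mul, sub_eq_add_neg, ← Finset.sum_neg_distrib]
  have detform : ∀ σ : Fin d → Perm (Fin n), (1 - z • sumPermC n d σ).det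
      = ∑ τ : Perm (Fin n), ((Equiv.Perm.sign τ : ℤ) : ℂ)
          * ∑ g : Fin n → Option (Fin d), ∏ i : Fin n,
              ((g i).elim (if τ i = i then (1:ℂ) else 0)
                (fun q => -z * (if σ q (τ i) = i then 1 else 0))) := by
    intro σ
    rw [Matrix.det_apply]
    refine Finset.sum_congr rfl fun τ _ => ?_
    rw [Units.smul_def, zsmul_eq_mul]
    congr 1
    rw [Finset.prod_congr rfl (fun i _ => entry σ τ i),
      Finset.prod_univ_sum (fun _ : Fin n => (univ : Finset (Option (Fin d))))]
    rw [Fintype.piFinset_univ]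
  simp only [detform]
  rw [Finset.sum_comm]
  have h1 : ∀ τ : Perm (Fin n),
      (∑ σ : Fin d → Perm (Fin n), ((Equiv.Perm.sign τ : ℤ) : ℂ)
          * ∑ g : Fin n → Option (Fin d), ∏ i : Fin n,
              ((g i).elim (if τ i = i then (1:ℂ) else 0)
                (fun q => -z * (if σ q (τ i) = i then 1 else 0))))
      = ∑ g : Fin n → Option (Fin d), ((Equiv.Perm.sign τ : ℤ) : ℂ)
          * ((if ∀ i, g i = none → τ i = i then 1 else 0) * Wg n d z g) := by
    intro τ
    rw [← Finset.mul_sum, Finset.sum_comm, Finset.mul_sum]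
    refine Finset.sum_congr rfl fun g _ => ?_
    rw [step_sigma n d z τ g]
    rfl
  simp only [h1]
  rw [Finset.sum_comm]
  refine Finset.sum_congr rfl fun g _ => ?_
  have hcond : ∀ τ : Perm (Fin n),
      (∀ i, g i = none → τ i = i) ↔ (∀ i ∉ univ.filter (fun i => g i ≠ none), τ i = i) := by
    intro τ
    constructor
    · intro H i hi
      apply H
      simpa using hi
    · intro H i hi
      apply H
      simp [hi]
  have h2 : ∀ τ : Perm (Fin n),
      ((Equiv.Perm.sign τ : ℤ) : ℂ) * ((if ∀ i, g i = none → τ i = i then 1 else 0) * Wg n d z g)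
      = (if ∀ i ∉ univ.filter (fun i => g i ≠ none), τ i = i
          then ((Equiv.Perm.sign τ : ℤ) : ℂ) else 0) * Wg n d z g := by
    intro τ
    by_cases hA : ∀ i, g i = none → τ i = i
    · rw [if_pos hA, if_pos ((hcond τ).mp hA)]
      ring
    · rw [if_neg hA, if_neg (fun h => hA ((hcond τ).mpr h))]
      ring
  simp only [h2]
  rw [← Finset.sum_mul, mul_comm]

def eOpt (n d : ℕ) : Option (Fin n × Fin d) → (Fin n → Option (Fin d))
  | none => fun _ => none
  | some (i, q) => fun j => if j = i then some q else none

lemma eOpt_inj (n d : ℕ) : Function.Injective (eOpt n d) := by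
  intro x y h
  match x, y with
  | none, none => rfl
  | none, some (i, q) =>
    have := congrFun h i
    simp [eOpt] at this
  | some (i, q), none =>
    have := congrFun h i
    simp [eOpt] at this
  | some (i, q), some (i', q') =>
    have h1 := congrFun h i
    simp only [eOpt, if_pos rfl] at h1
    by_cases hii : i = i'
    · subst hii
      simp at h1
      rw [h1]
    · rw [if_neg hii] at h1
      simp at h1

lemma image_eq (n d : ℕ) :
    univ.filter (fun g : Fin n → Option (Fin d) =>
        (univ.filter (fun i => g i ≠ none)).card ≤ 1)
      = Finset.image (eOpt n d) univ := by
  ext g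
  simp only [Finset.mem_filter, Finset.mem_univ, true_and, Finset.mem_image]
  constructor
  · intro h
    rcases Nat.le_one_iff_eq_zero_or_eq_one.mp h with h0 | h1
    · rw [Finset.card_eq_zero] at h0
      refine ⟨none, funext fun j => ?_⟩
      have : j ∉ univ.filter (fun i => g i ≠ none) := by rw [h0]; simp
      simp only [Finset.mem_filter, Finset.mem_univ, true_and, not_not] at this
      simp [eOpt, this]
    · rw [Finset.card_eq_one] at h1
      obtain ⟨i, hi⟩ := h1
      have hgi : g i ≠ none := by
        have : i ∈ univ.filter (fun i => g i ≠ none) := by rw [hi]; simp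
        simpa using this
      obtain ⟨q, hq⟩ := Option.ne_none_iff_exists'.mp hgi
      refine ⟨some (i, q), funext fun j => ?_⟩
      by_cases hj : j = i
      · subst hj; simp [eOpt, hq]
      · have : j ∉ univ.filter (fun i => g i ≠ none) := by rw [hi]; simpa using hj
        simp only [Finset.mem_filter, Finset.mem_univ, true_and, not_not] at this
        simp [eOpt, hj, this]
  · rintro ⟨x, rfl⟩
    match x with
    | none =>
      have : univ.filter (fun i : Fin n => eOpt n d none i ≠ none) = ∅ := by
        ext j; simp [eOpt]
      rw [this]; simp
    | some (i, q) =>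
      have : univ.filter (fun j : Fin n => eOpt n d (some (i, q)) j ≠ none) = {i} := by
        ext j
        simp only [Finset.mem_filter, Finset.mem_univ, true_and, Finset.mem_singleton, eOpt]
        by_cases hj : j = i <;> simp [hj]
      rw [this]; simp

lemma W_none (n d : ℕ) (z : ℂ) : Wg n d z (eOpt n d none) = ((n.factorial : ℂ)) ^ d := by
  unfold Wg
  have h : ∀ q : Fin d, univ.filter (fun i : Fin n => eOpt n d none i = some q) = ∅ := by
    intro q; ext j; simp [eOpt]
  simp only [h]
  simp

lemma W_some (n d : ℕ) (z : ℂ) (i : Fin n) (q₀ : Fin d) :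
    Wg n d z (eOpt n d (some (i, q₀)))
      = (-z) * ((n - 1).factorial : ℂ) * ((n.factorial : ℂ)) ^ (d - 1) := by
  unfold Wg
  have hk : ∀ q : Fin d,
      (univ.filter (fun j : Fin n => eOpt n d (some (i, q₀)) j = some q)).card
        = if q = q₀ then 1 else 0 := by
    intro q
    by_cases h : q = q₀
    · subst h
      have : univ.filter (fun j : Fin n => eOpt n d (some (i, q)) j = some q) = {i} := by
        ext j
        simp only [Finset.mem_filter, Finset.mem_univ, true_and, Finset.mem_singleton, eOpt]
        by_cases hj : j = i <;> simp [hj]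
      rw [this]; simp
    · have : univ.filter (fun j : Fin n => eOpt n d (some (i, q₀)) j = some q) = ∅ := by
        ext j
        simp only [Finset.mem_filter, Finset.mem_univ, true_and, Finset.notMem_empty, iff_false,
          eOpt]
        by_cases hj : j = i
        · simp [hj]
          exact fun h' => h h'.symm
        · simp [hj]
      rw [this]; simp [h]
  simp only [hk]
  rw [← Finset.mul_prod_erase univ _ (Finset.mem_univ q₀)]
  rw [if_pos rfl]
  have herase : ∀ q ∈ univ.erase q₀,
      ((-z) ^ (if q = q₀ then 1 else 0) * ((n - if q = q₀ then 1 else 0).factorial : ℂ))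
        = (n.factorial : ℂ) := by
    intro q hq
    rw [if_neg (Finset.mem_erase.mp hq).1]
    simp
  rw [Finset.prod_congr rfl herase, Finset.prod_const, Finset.card_erase_of_mem (Finset.mem_univ q₀)]
  simp [mul_assoc]

/-- For the sum `A` of `d ≥ 1` independent uniform `n×n` permutation matrices and every
`z ∈ ℂ`, the expected characteristic-type determinant satisfies
`E[det(Iₙ − z·A)] = 1 − d·z`. -/
theorem expected_det (n d : ℕ) (hn : 1 ≤ n) (hd : 1 ≤ d) (z : ℂ) :
    expectC (fun σ : Fin d → Equiv.Perm (Fin n) =>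
        (1 - z • sumPermC n d σ).det) = 1 - d * z := by
  unfold expectC
  have hcardfun : (Fintype.card (Fin d → Perm (Fin n)) : ℂ) = ((n.factorial : ℂ)) ^ d := by
    rw [Fintype.card_fun, Fintype.card_perm, Fintype.card_fin, Fintype.card_fin]
    push_cast
    ring
  rw [hcardfun, bigsum n d z]
  have hT : ∀ g : Fin n → Option (Fin d),
      (∑ τ : Perm (Fin n), (if ∀ i ∉ univ.filter (fun i => g i ≠ none), τ i = i
          then ((Equiv.Perm.sign τ : ℤ) : ℂ) else 0))
        = if (univ.filter (fun i => g i ≠ none)).card ≤ 1 then 1 else 0 := by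
    intro g
    by_cases h : (univ.filter (fun i => g i ≠ none)).card ≤ 1
    · rw [if_pos h, signsum_le1 _ _ h]
    · rw [if_neg h, signsum_ge2 _ _ (by omega)]
  simp only [hT, mul_ite, mul_one, mul_zero]
  rw [← Finset.sum_filter, image_eq n d, Finset.sum_image (fun x _ y _ h => eOpt_inj n d h)]
  rw [Fintype.sum_option]
  simp only [W_none, Prod.mk.eta]
  have hsome : ∀ p : Fin n × Fin d, Wg n d z (eOpt n d (some p))
      = (-z) * ((n - 1).factorial : ℂ) * ((n.factorial : ℂ)) ^ (d - 1) := by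
    intro p
    rw [show (some p) = some (p.1, p.2) by rfl, W_some]
  simp only [hsome]
  rw [Finset.sum_const, Finset.card_univ, Fintype.card_prod, Fintype.card_fin, Fintype.card_fin]
  have hfac : ((n.factorial : ℂ)) = (n : ℂ) * ((n - 1).factorial : ℂ) := by
    rw [show ((n.factorial : ℂ)) = ((n * (n-1).factorial : ℕ) : ℂ) by
      rw [Nat.mul_factorial_pred (by omega)]]
    push_cast
    ring
  have hpow : ((n.factorial : ℂ)) ^ d = ((n.factorial : ℂ)) ^ (d - 1) * (n.factorial : ℂ) := by
    rw [← pow_succ]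
    congr 1
    omega
  have hne : ((n.factorial : ℂ)) ^ d ≠ 0 := by
    apply pow_ne_zero
    exact_mod_cast Nat.cast_ne_zero.mpr (Nat.factorial_ne_zero n)
  rw [div_eq_iff hne]
  rw [nsmul_eq_mul]
  push_cast
  rw [hpow, hfac]
  ring
end

section
/- Let A be a random n×n matrix with complex entries that are almost surely bounded, and suppose the law of A is invariant under permuting its columns, i.e. for every permutation σ of {1,…,n} the matrix (A_{i,σ(j)})_{i,j} has the same law as A. For 1 ≤ k ≤ n let Δ_k = Σ_{I ⊆ {1,…,n}, |I| = k} det(A(I)), where A(I) is the submatrix of A with rows and columns indexed by I. Then E[Δ_k] = 0 for every 2 ≤ k ≤ n, and E[Δ_1] = E[tr A]. -/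
open Finset MeasureTheory

open scoped Classical in
/-- The `k`-th secular coefficient `Δ_k = Σ_{|I| = k} det(A(I))` of an `n×n` complex matrix,
where `A(I)` is the submatrix with rows and columns indexed by `I`. -/
noncomputable def secCoeff {n : ℕ} (M : Fin n → Fin n → ℂ) (k : ℕ) : ℂ :=
  ∑ I ∈ Finset.univ.filter (fun I : Finset (Fin n) => I.card = k),
    Matrix.det (Matrix.of fun i j : {x // x ∈ I} => M i.1 j.1)

namespace SecAux

variable {n : ℕ}

/-- The determinant of the submatrix indexed by `I`, as a function of the matrix. -/
noncomputable def detI (I : Finset (Fin n)) (M : Fin n → Fin n → ℂ) : ℂ :=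
  Matrix.det (Matrix.of fun i j : {x // x ∈ I} => M i.1 j.1)

lemma measurable_detI (I : Finset (Fin n)) : Measurable (detI I) := by
  unfold detI
  simp only [Matrix.det_apply', Matrix.of_apply]
  apply Finset.measurable_sum
  intro σ _
  apply Measurable.const_mul
  apply Finset.measurable_prod
  intro j _
  exact (measurable_pi_apply _).eval

lemma norm_detI_le (I : Finset (Fin n)) (C : ℝ) (M : Fin n → Fin n → ℂ)
    (h : ∀ i j, ‖M i j‖ ≤ C) :
    ‖detI I M‖ ≤ (Fintype.card (Equiv.Perm {x // x ∈ I}) : ℝ) * (max C 0) ^ I.card := by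
  unfold detI
  rw [Matrix.det_apply']
  calc ‖∑ σ : Equiv.Perm {x // x ∈ I}, (Equiv.Perm.sign σ : ℂ) *
        ∏ j, (Matrix.of fun i j : {x // x ∈ I} => M i.1 j.1) (σ j) j‖
      ≤ ∑ σ : Equiv.Perm {x // x ∈ I}, ‖(Equiv.Perm.sign σ : ℂ) *
        ∏ j, (Matrix.of fun i j : {x // x ∈ I} => M i.1 j.1) (σ j) j‖ := norm_sum_le _ _
    _ ≤ ∑ _σ : Equiv.Perm {x // x ∈ I}, (max C 0) ^ I.card := by
        apply Finset.sum_le_sum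
        intro σ _
        rw [norm_mul]
        have hs : ‖((Equiv.Perm.sign σ : ℤ) : ℂ)‖ = 1 := by
          rcases Int.units_eq_one_or (Equiv.Perm.sign σ) with h1 | h1 <;> simp [h1]
        rw [hs, one_mul, norm_prod]
        have : ∏ j : {x // x ∈ I}, ‖(Matrix.of fun i j : {x // x ∈ I} => M i.1 j.1) (σ j) j‖
            ≤ ∏ _j : {x // x ∈ I}, (max C 0) := by
          apply Finset.prod_le_prod
          · intro j _; exact norm_nonneg _
          · intro j _
            exact le_trans (h _ _) (le_max_left _ _)
        simpa [Fintype.card_coe] using this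
    _ = (Fintype.card (Equiv.Perm {x // x ∈ I}) : ℝ) * (max C 0) ^ I.card := by
        simp [Finset.sum_const, mul_comm]

variable {Ω : Type*} [MeasurableSpace Ω] {μ : Measure Ω} [IsProbabilityMeasure μ]

lemma integrable_detI (I : Finset (Fin n)) (A : Ω → Fin n → Fin n → ℂ) (hA : Measurable A)
    (hbdd : ∃ C : ℝ, ∀ᵐ ω ∂μ, ∀ i j, ‖A ω i j‖ ≤ C) :
    Integrable (fun ω => detI I (A ω)) μ := by
  obtain ⟨C, hC⟩ := hbdd
  refine Integrable.mono' (integrable_const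
    ((Fintype.card (Equiv.Perm {x // x ∈ I}) : ℝ) * (max C 0) ^ I.card))
    (((measurable_detI I).comp hA).aestronglyMeasurable) ?_
  filter_upwards [hC] with ω hω
  exact norm_detI_le I C (A ω) hω

lemma integral_detI_zero (I : Finset (Fin n)) (hI : 2 ≤ I.card)
    (A : Ω → Fin n → Fin n → ℂ) (hA : Measurable A)
    (hinv : ∀ σ : Equiv.Perm (Fin n),
      Measure.map (fun ω => fun i j => A ω i (σ j)) μ = Measure.map A μ) :
    ∫ ω, detI I (A ω) ∂μ = 0 := by
  obtain ⟨a, ha, b, hb, hab⟩ := Finset.one_lt_card.mp hI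
  set σ : Equiv.Perm (Fin n) := Equiv.swap a b with hσ
  have key : ∀ M : Fin n → Fin n → ℂ, detI I (fun i j => M i (σ j)) = - detI I M := by
    intro M
    set e : {x // x ∈ I} ≃ {x // x ∈ I} := Equiv.swap ⟨a, ha⟩ ⟨b, hb⟩ with he
    have hec : ∀ j : {x // x ∈ I}, (e j).1 = σ j.1 := by
      intro j
      simp only [he, hσ, Equiv.swap_apply_def]
      split_ifs with h1 h2 h3 h4 h5 <;> simp_all [Subtype.ext_iff]
    have hm : (Matrix.of fun i j : {x // x ∈ I} => M i.1 (σ j.1)) =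
        (Matrix.of fun i j : {x // x ∈ I} => M i.1 j.1).submatrix id e := by
      ext i j
      simp [Matrix.submatrix, hec j]
    unfold detI
    simp only [hm]
    rw [Matrix.det_permute']
    have hne : (⟨a, ha⟩ : {x // x ∈ I}) ≠ ⟨b, hb⟩ := fun h => hab (congrArg Subtype.val h)
    rw [he, Equiv.Perm.sign_swap hne]
    simp
  have hφ : Measurable (fun ω => fun i j => A ω i (σ j)) :=
    measurable_pi_lambda _ fun i => measurable_pi_lambda _ fun j => hA.eval.eval
  have h1 : ∫ ω, detI I (A ω) ∂μ = ∫ M, detI I M ∂(Measure.map A μ) :=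
    (integral_map hA.aemeasurable (measurable_detI I).aestronglyMeasurable).symm
  have h2 : ∫ M, detI I M ∂(Measure.map A μ) = ∫ ω, detI I (fun i j => A ω i (σ j)) ∂μ := by
    rw [← hinv σ]
    exact integral_map hφ.aemeasurable (measurable_detI I).aestronglyMeasurable
  have h3 : ∫ ω, detI I (fun i j => A ω i (σ j)) ∂μ = - ∫ ω, detI I (A ω) ∂μ := by
    simp only [key]
    exact integral_neg _
  have h4 : ∫ ω, detI I (A ω) ∂μ = - ∫ ω, detI I (A ω) ∂μ := h1.trans (h2.trans h3)
  have h5 : (2 : ℂ) * ∫ ω, detI I (A ω) ∂μ = 0 := by linear_combination h4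
  simpa [two_ne_zero] using mul_eq_zero.mp h5

open scoped Classical in
lemma secCoeff_eq_sum (M : Fin n → Fin n → ℂ) (k : ℕ) :
    secCoeff M k = ∑ I ∈ Finset.univ.filter (fun I : Finset (Fin n) => I.card = k),
      detI I M := rfl

lemma secCoeff_one (M : Fin n → Fin n → ℂ) : secCoeff M 1 = ∑ i, M i i := by
  classical
  rw [secCoeff_eq_sum]
  have himg : Finset.univ.filter (fun I : Finset (Fin n) => I.card = 1) =
      Finset.univ.image (fun i : Fin n => ({i} : Finset (Fin n))) := by
    ext I
    simp [Finset.card_eq_one, eq_comm]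
  rw [himg, Finset.sum_image (fun i _ j _ h => Finset.singleton_injective h)]
  apply Finset.sum_congr rfl
  intro i _
  haveI : Unique {x // x ∈ ({i} : Finset (Fin n))} :=
    ⟨⟨⟨i, Finset.mem_singleton_self i⟩⟩, fun j => Subtype.ext (Finset.mem_singleton.mp j.2)⟩
  rw [detI, Matrix.det_unique]
  have hd : ((default : {x // x ∈ ({i} : Finset (Fin n))}) : Fin n) = i :=
    Finset.mem_singleton.mp (Subtype.prop _)
  simp [hd]

end SecAux

/-- If the law of a bounded random `n×n` complex matrix `A` is invariant under permuting its
columns, then `E[Δ_k] = 0` for all `2 ≤ k ≤ n`, and `E[Δ_1] = E[tr A]`. -/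
theorem expected_secular_coeff (n : ℕ) (Ω : Type*) [MeasurableSpace Ω]
    (μ : Measure Ω) [IsProbabilityMeasure μ]
    (A : Ω → Fin n → Fin n → ℂ) (hA : Measurable A)
    (hbdd : ∃ C : ℝ, ∀ᵐ ω ∂μ, ∀ i j, ‖A ω i j‖ ≤ C)
    (hinv : ∀ σ : Equiv.Perm (Fin n),
      Measure.map (fun ω => fun i j => A ω i (σ j)) μ = Measure.map A μ) :
    (∀ k, 2 ≤ k → k ≤ n → ∫ ω, secCoeff (A ω) k ∂μ = 0) ∧
      (∫ ω, secCoeff (A ω) 1 ∂μ = ∫ ω, ∑ i, A ω i i ∂μ) := by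
  classical
  constructor
  · intro k hk _
    simp only [SecAux.secCoeff_eq_sum]
    rw [integral_finset_sum _ (fun I _ => SecAux.integrable_detI I A hA hbdd)]
    apply Finset.sum_eq_zero
    intro I hI
    have hcard : I.card = k := (Finset.mem_filter.mp hI).2
    exact SecAux.integral_detI_zero I (hcard ▸ hk) A hA hinv
  · simp only [SecAux.secCoeff_one]
end

section
/- Let A be a random n×n matrix with complex entries that are almost surely bounded, and suppose the law of A is invariant under permuting rows and under permuting columns, i.e. for every permutation σ of {1,…,n}, both (A_{σ(i),j})_{i,j} and (A_{i,σ(j)})_{i,j} have the same law as A. Let I, J ⊆ {1,…,n} with |I| = |J| = k. If |I ∩ J| ≤ k − 2, then E[det(A(I))·det(A(J))] = 0. -/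
open Finset MeasureTheory

/-- The determinant of the submatrix `A(I) = (A_{i,j})_{i,j ∈ I}` of an `n×n` complex
matrix. -/
noncomputable def subDet {n : ℕ} (M : Fin n → Fin n → ℂ) (I : Finset (Fin n)) : ℂ :=
  Matrix.det (Matrix.of fun i j : {x // x ∈ I} => M i.1 j.1)

lemma continuous_subDet {n : ℕ} (I : Finset (Fin n)) :
    Continuous fun M : Fin n → Fin n → ℂ => subDet M I := by
  unfold subDet
  apply Continuous.matrix_det
  apply continuous_pi; intro i; apply continuous_pi; intro j
  exact (continuous_apply j.1).comp (continuous_apply i.1)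

/-- Swapping two rows inside `I` flips the sign of `subDet · I`. -/
lemma subDet_swap_mem {n : ℕ} (M : Fin n → Fin n → ℂ) (I : Finset (Fin n))
    {a b : Fin n} (ha : a ∈ I) (hb : b ∈ I) (hab : a ≠ b) :
    subDet (fun i j => M (Equiv.swap a b i) j) I = - subDet M I := by
  set a' : {x // x ∈ I} := ⟨a, ha⟩
  set b' : {x // x ∈ I} := ⟨b, hb⟩
  have hab' : a' ≠ b' := fun h => hab (congrArg Subtype.val h)
  have key : (Matrix.of fun i j : {x // x ∈ I} => M (Equiv.swap a b i.1) j.1)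
      = (Matrix.of fun i j : {x // x ∈ I} => M i.1 j.1).submatrix (Equiv.swap a' b') id := by
    ext i j
    simp only [Matrix.submatrix_apply, Matrix.of_apply, id]
    congr 1
    rcases eq_or_ne i a' with rfl | hia
    · simp [a', b']
    rcases eq_or_ne i b' with rfl | hib
    · simp [a', b']
    · rw [Equiv.swap_apply_of_ne_of_ne hia hib,
        Equiv.swap_apply_of_ne_of_ne (fun h => hia (Subtype.ext h))
          (fun h => hib (Subtype.ext h))]
  unfold subDet
  rw [key, Matrix.det_permute, Equiv.Perm.sign_swap hab']
  push_cast
  ring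

/-- If the swap moves only points outside `J`, `subDet · J` is unchanged. -/
lemma subDet_swap_not_mem {n : ℕ} (M : Fin n → Fin n → ℂ) (J : Finset (Fin n))
    {a b : Fin n} (ha : a ∉ J) (hb : b ∉ J) :
    subDet (fun i j => M (Equiv.swap a b i) j) J = subDet M J := by
  unfold subDet
  congr 1
  ext i j
  show M ((Equiv.swap a b) i.1) j.1 = M i.1 j.1
  rw [Equiv.swap_apply_of_ne_of_ne (fun h : i.1 = a => ha (h ▸ i.2))
    (fun h : i.1 = b => hb (h ▸ i.2))]

/-- If the law of a bounded random `n×n` complex matrix `A` is invariant under permuting its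
rows and under permuting its columns, and `I, J ⊆ {1,…,n}` with `|I| = |J| = k` and
`|I ∩ J| ≤ k − 2`, then `E[det(A(I))·det(A(J))] = 0`. -/
theorem expected_prod_subdets (n : ℕ) (Ω : Type*) [MeasurableSpace Ω]
    (μ : Measure Ω) [IsProbabilityMeasure μ]
    (A : Ω → Fin n → Fin n → ℂ) (hA : Measurable A)
    (hbdd : ∃ C : ℝ, ∀ᵐ ω ∂μ, ∀ i j, ‖A ω i j‖ ≤ C)
    (hrow : ∀ σ : Equiv.Perm (Fin n),
      Measure.map (fun ω => fun i j => A ω (σ i) j) μ = Measure.map A μ)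
    (hcol : ∀ σ : Equiv.Perm (Fin n),
      Measure.map (fun ω => fun i j => A ω i (σ j)) μ = Measure.map A μ)
    (k : ℕ) (I J : Finset (Fin n)) (hI : I.card = k) (hJ : J.card = k)
    (hIJ : (I ∩ J).card + 2 ≤ k) :
    ∫ ω, subDet (A ω) I * subDet (A ω) J ∂μ = 0 := by
  -- there are two distinct elements of I \ J
  have hcard : 2 ≤ (I \ J).card := by
    have := Finset.card_sdiff_add_card_inter I J
    omega
  obtain ⟨a, ha, b, hb, hab⟩ := Finset.one_lt_card.mp (by omega : 1 < (I \ J).card)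
  have haI : a ∈ I := (Finset.mem_sdiff.mp ha).1
  have hbI : b ∈ I := (Finset.mem_sdiff.mp hb).1
  have haJ : a ∉ J := (Finset.mem_sdiff.mp ha).2
  have hbJ : b ∉ J := (Finset.mem_sdiff.mp hb).2
  set σ : Equiv.Perm (Fin n) := Equiv.swap a b
  set f : (Fin n → Fin n → ℂ) → ℂ := fun M => subDet M I * subDet M J with hf
  have hfc : Continuous f := (continuous_subDet I).mul (continuous_subDet J)
  set Aσ : Ω → Fin n → Fin n → ℂ := fun ω => fun i j => A ω (σ i) j with hAσdef
  have hAσ : Measurable Aσ := by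
    apply measurable_pi_lambda; intro i; apply measurable_pi_lambda; intro j
    exact (measurable_pi_apply j).comp ((measurable_pi_apply (σ i)).comp hA)
  have h1 : ∫ ω, f (A ω) ∂μ = ∫ ω, f (Aσ ω) ∂μ := by
    rw [← integral_map hA.aemeasurable (hfc.aestronglyMeasurable),
      ← hrow σ, integral_map hAσ.aemeasurable (hfc.aestronglyMeasurable)]
  have h2 : ∀ ω, f (Aσ ω) = - f (A ω) := by
    intro ω
    simp only [hf, hAσdef]
    rw [subDet_swap_mem (A ω) I haI hbI hab, subDet_swap_not_mem (A ω) J haJ hbJ]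
    ring
  have h3 : ∫ ω, f (A ω) ∂μ = - ∫ ω, f (A ω) ∂μ :=
    calc ∫ ω, f (A ω) ∂μ = ∫ ω, f (Aσ ω) ∂μ := h1
      _ = ∫ ω, -f (A ω) ∂μ := by simp only [h2]
      _ = - ∫ ω, f (A ω) ∂μ := integral_neg _
  have h4 : (2 : ℂ) * ∫ ω, f (A ω) ∂μ = 0 := by linear_combination h3
  have h5 := (mul_eq_zero.mp h4).resolve_left two_ne_zero
  exact h5
end

section
/- Let A = P^{(1)} + ⋯ + P^{(d)} be the sum of d ≥ 1 independent uniformly random n×n permutation matrices. Let r ≥ 1, let i_1,…,i_r, j_1,…,j_r ∈ {1,…,n} be such that the pairs (i_1,j_1),…,(i_r,j_r) are pairwise distinct, and let k_1,…,k_r ∈ {1,…,d} with k = k_1 + ⋯ + k_r ≤ n. Then P(A_{i_1,j_1} = k_1, …, A_{i_r,j_r} = k_r) ≤ (∏_{m=1}^r C(d, k_m)) · (n − k)!/n!, where C(d, k_m) is the binomial coefficient d choose k_m. In particular this probability is at most (d^k / (k_1!⋯k_r!)) · (n − k)!/n!. -/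
open Finset

open scoped Classical in
/-- Probability of an event under the uniform distribution on a finite type. -/
noncomputable def pr {α : Type*} [Fintype α] (p : α → Prop) : ℝ :=
  ((Finset.univ.filter fun a => p a).card : ℝ) / Fintype.card α

/-- The permutation matrix of `π`, with natural-number entries: `P i j = 1` iff `π i = j`. -/
def permMatrixN (n : ℕ) (π : Equiv.Perm (Fin n)) : Matrix (Fin n) (Fin n) ℕ :=
  fun i j => if π i = j then 1 else 0

/-- The sum `A = P⁽¹⁾ + ⋯ + P⁽ᵈ⁾` of the permutation matrices of `σ 0, …, σ (d-1)`. -/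
def sumPermN (n d : ℕ) (σ : Fin d → Equiv.Perm (Fin n)) : Matrix (Fin n) (Fin n) ℕ :=
  ∑ q : Fin d, permMatrixN n (σ q)

open scoped Classical



/-- Count of permutations fixing every element of `T` pointwise. -/
lemma card_fixing (n : ℕ) (T : Finset (Fin n)) :
    (Finset.univ.filter fun τ : Equiv.Perm (Fin n) => ∀ x ∈ T, τ x = x).card
      = Nat.factorial (n - T.card) := by
  have e : Equiv.Perm {x : Fin n // x ∉ T} ≃
      {τ : Equiv.Perm (Fin n) // ∀ x ∈ T, τ x = x} :=
    (Equiv.Perm.subtypeEquivSubtypePerm (fun x => x ∉ T)).trans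
      (Equiv.subtypeEquivRight (fun f => by
        constructor
        · intro h x hx
          exact h x (by simpa using hx)
        · intro h x hx
          exact h x (by simpa using hx)))
  have h1 : (Finset.univ.filter fun τ : Equiv.Perm (Fin n) => ∀ x ∈ T, τ x = x).card
      = Fintype.card {τ : Equiv.Perm (Fin n) // ∀ x ∈ T, τ x = x} :=
    (Fintype.card_subtype _).symm
  rw [h1, ← Fintype.card_congr e, Fintype.card_perm]
  congr 1
  rw [Fintype.card_subtype_compl]
  simp [Fintype.card_coe]

/-- Count of permutations satisfying `σ (i m) = j m` for all `m ∈ M`. -/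
lemma card_constrained {n r : ℕ} (i j : Fin r → Fin n)
    (hdist : ∀ a b : Fin r, a ≠ b → (i a, j a) ≠ (i b, j b))
    (M : Finset (Fin r)) :
    (Finset.univ.filter fun σ : Equiv.Perm (Fin n) => ∀ m ∈ M, σ (i m) = j m).card
      ≤ Nat.factorial (n - M.card) := by
  set s := Finset.univ.filter fun σ : Equiv.Perm (Fin n) => ∀ m ∈ M, σ (i m) = j m with hs
  rcases s.eq_empty_or_nonempty with h | ⟨σ0, hσ0⟩
  · simp [h, Nat.factorial_pos, Nat.succ_le_of_lt, (Nat.factorial_pos _).le]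
  · have hσ0' : ∀ m ∈ M, σ0 (i m) = j m := by
      simpa [hs] using hσ0
    have hinj : Set.InjOn i (M : Set (Fin r)) := by
      intro a ha b hb hab
      by_contra hne
      apply hdist a b hne
      have : j a = j b := by
        rw [← hσ0' a ha, ← hσ0' b hb, hab]
      exact Prod.ext hab this
    have hbij : s.card = (Finset.univ.filter fun τ : Equiv.Perm (Fin n) =>
        ∀ m ∈ M, τ (i m) = i m).card := by
      apply Finset.card_equiv (Equiv.mulLeft σ0⁻¹)
      intro σ
      simp only [hs, Finset.mem_filter, Finset.mem_univ, true_and, Equiv.coe_mulLeft,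
        Equiv.Perm.mul_apply]
      constructor
      · intro h m hm; rw [h m hm, ← hσ0' m hm]; simp
      · intro h m hm
        have := h m hm
        have : σ (i m) = σ0 (i m) := by
          have := congrArg σ0 this
          simpa using this
        rw [this, hσ0' m hm]
    have hfix : (Finset.univ.filter fun τ : Equiv.Perm (Fin n) =>
        ∀ m ∈ M, τ (i m) = i m).card
        = Nat.factorial (n - (M.image i).card) := by
      rw [← card_fixing n (M.image i)]
      congr 1
      apply Finset.filter_congr
      intro τ _
      simp [Finset.forall_mem_image]
    rw [hbij, hfix, Finset.card_image_of_injOn hinj]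

/-- Two-term factorial inequality. -/
lemma fact_two (n a b : ℕ) (h : a + b ≤ n) :
    Nat.factorial (n - a) * Nat.factorial (n - b)
      ≤ Nat.factorial n * Nat.factorial (n - (a + b)) := by
  have hab : a ≤ n - b := by omega
  have h1 : Nat.factorial (n - (a + b)) * (n - b).descFactorial a = Nat.factorial (n - b) := by
    have := Nat.factorial_mul_descFactorial hab
    rwa [show n - b - a = n - (a + b) by omega] at this
  have h2 : Nat.factorial (n - a) * Nat.descFactorial n a = Nat.factorial n :=
    Nat.factorial_mul_descFactorial (by omega)
  calc Nat.factorial (n - a) * Nat.factorial (n - b)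
      = Nat.factorial (n - a) * (Nat.factorial (n - (a + b)) * (n - b).descFactorial a) := by
        rw [h1]
    _ ≤ Nat.factorial (n - a) * (Nat.factorial (n - (a + b)) * Nat.descFactorial n a) := by
        gcongr
        exact Nat.sub_le n b
    _ = Nat.factorial n * Nat.factorial (n - (a + b)) := by
        rw [← h2]; ring

lemma fact_prod {ι : Type*} (n : ℕ) (t : ι → ℕ) (s : Finset ι) :
    (∑ q ∈ s, t q) ≤ n →
    (∏ q ∈ s, Nat.factorial (n - t q)) * Nat.factorial n
      ≤ Nat.factorial (n - ∑ q ∈ s, t q) * ∏ q ∈ s, Nat.factorial n := by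
  induction s using Finset.induction_on with
  | empty => simp
  | @insert a s' ha ih =>
    intro h
    rw [Finset.sum_insert ha] at h ⊢
    rw [Finset.prod_insert ha, Finset.prod_insert ha]
    have hs' : (∑ q ∈ s', t q) ≤ n := by omega
    calc Nat.factorial (n - t a) * (∏ q ∈ s', Nat.factorial (n - t q)) * Nat.factorial n
        = Nat.factorial (n - t a) * ((∏ q ∈ s', Nat.factorial (n - t q)) * Nat.factorial n) := by
          ring
      _ ≤ Nat.factorial (n - t a) *
            (Nat.factorial (n - ∑ q ∈ s', t q) * ∏ q ∈ s', Nat.factorial n) := by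
          exact Nat.mul_le_mul_left _ (ih hs')
      _ = (Nat.factorial (n - t a) * Nat.factorial (n - ∑ q ∈ s', t q)) *
            ∏ q ∈ s', Nat.factorial n := by ring
      _ ≤ (Nat.factorial n * Nat.factorial (n - (t a + ∑ q ∈ s', t q))) *
            ∏ q ∈ s', Nat.factorial n := by
          exact Nat.mul_le_mul_right _ (fact_two n (t a) (∑ q ∈ s', t q) h)
      _ = Nat.factorial (n - (t a + ∑ q ∈ s', t q)) *
            (Nat.factorial n * ∏ q ∈ s', Nat.factorial n) := by ring

/-- For the sum `A` of `d ≥ 1` independent uniform `n×n` permutation matrices, pairwise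
distinct pairs `(i_m, j_m)` and values `k_m ∈ {1,…,d}` with `k = Σ k_m ≤ n`:
`P(A_{i₁,j₁} = k₁, …, A_{i_r,j_r} = k_r) ≤ (∏_m C(d, k_m))·(n−k)!/n!`, and in particular
this probability is at most `(d^k/(k₁!⋯k_r!))·(n−k)!/n!`. -/
theorem entries_prob_upper_bound (n d r : ℕ) (hd : 1 ≤ d) (hr : 1 ≤ r)
    (i j : Fin r → Fin n)
    (hdist : ∀ a b : Fin r, a ≠ b → (i a, j a) ≠ (i b, j b))
    (k : Fin r → ℕ) (hk1 : ∀ m, 1 ≤ k m) (hkd : ∀ m, k m ≤ d)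
    (K : ℕ) (hK : ∑ m, k m = K) (hKn : K ≤ n) :
    pr (fun σ : Fin d → Equiv.Perm (Fin n) =>
        ∀ m : Fin r, sumPermN n d σ (i m) (j m) = k m) ≤
      (∏ m : Fin r, (Nat.choose d (k m) : ℝ)) *
        (Nat.factorial (n - K) : ℝ) / (Nat.factorial n : ℝ) ∧
    pr (fun σ : Fin d → Equiv.Perm (Fin n) =>
        ∀ m : Fin r, sumPermN n d σ (i m) (j m) = k m) ≤
      ((d : ℝ) ^ K / ∏ m : Fin r, (Nat.factorial (k m) : ℝ)) *
        (Nat.factorial (n - K) : ℝ) / (Nat.factorial n : ℝ) := by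
  classical
  -- the family of admissible "witness" set-systems
  set 𝒮 : Finset (Fin r → Finset (Fin d)) :=
    Fintype.piFinset (fun m => Finset.powersetCard (k m) Finset.univ) with h𝒮
  set F : (Fin r → Finset (Fin d)) → (Fin d → Equiv.Perm (Fin n)) → Prop :=
    fun S σ => ∀ q : Fin d, ∀ m : Fin r, q ∈ S m → σ q (i m) = j m with hF
  have hsub : (Finset.univ.filter fun σ : Fin d → Equiv.Perm (Fin n) =>
        ∀ m : Fin r, sumPermN n d σ (i m) (j m) = k m)
      ⊆ 𝒮.biUnion (fun S => Finset.univ.filter (F S)) := by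
    intro σ hσ
    simp only [Finset.mem_filter, Finset.mem_univ, true_and] at hσ
    rw [Finset.mem_biUnion]
    refine ⟨fun m => Finset.univ.filter (fun q => σ q (i m) = j m), ?_, ?_⟩
    · rw [h𝒮, Fintype.mem_piFinset]
      intro m
      rw [Finset.mem_powersetCard]
      refine ⟨Finset.subset_univ _, ?_⟩
      have hsum : sumPermN n d σ (i m) (j m)
          = (Finset.univ.filter fun q => σ q (i m) = j m).card := by
        rw [Finset.card_filter]
        simp [sumPermN, permMatrixN, Matrix.sum_apply]
      rw [← hsum, hσ m]
    · simp only [Finset.mem_filter, Finset.mem_univ, true_and, hF]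
      intro q m hq
      exact hq
  have hperS : ∀ S ∈ 𝒮, (Finset.univ.filter (F S)).card * Nat.factorial n
      ≤ Nat.factorial (n - K) * (Nat.factorial n) ^ d := by
    intro S hS
    have hcardS : ∀ m, (S m).card = k m := by
      intro m
      have := (Fintype.mem_piFinset.mp hS) m
      exact (Finset.mem_powersetCard.mp this).2
    set t : Fin d → ℕ := fun q => (Finset.univ.filter (fun m => q ∈ S m)).card with ht
    have hsumt : ∑ q, t q = K := by
      have h1 : ∑ q, t q = ∑ m, (S m).card := by
        simp only [ht, Finset.card_filter]
        rw [Finset.sum_comm]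
        refine Finset.sum_congr rfl fun m _ => ?_
        rw [← Finset.card_filter, Finset.filter_univ_mem]
      rw [h1, ← hK]
      exact Finset.sum_congr rfl fun m _ => hcardS m
    have hfac : (Finset.univ.filter (F S)) =
        Fintype.piFinset (fun q => Finset.univ.filter
          (fun σ1 : Equiv.Perm (Fin n) => ∀ m, q ∈ S m → σ1 (i m) = j m)) := by
      ext σ
      simp [hF, Fintype.mem_piFinset]
    rw [hfac, Fintype.card_piFinset]
    have hq : ∀ q, (Finset.univ.filter
        (fun σ1 : Equiv.Perm (Fin n) => ∀ m, q ∈ S m → σ1 (i m) = j m)).card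
        ≤ Nat.factorial (n - t q) := by
      intro q
      refine le_trans (le_of_eq ?_) (card_constrained i j hdist
        (Finset.univ.filter (fun m => q ∈ S m)))
      congr 1
      apply Finset.filter_congr
      intro σ1 _
      simp
    calc (∏ q, (Finset.univ.filter
          (fun σ1 : Equiv.Perm (Fin n) => ∀ m, q ∈ S m → σ1 (i m) = j m)).card)
          * Nat.factorial n
        ≤ (∏ q, Nat.factorial (n - t q)) * Nat.factorial n :=
          Nat.mul_le_mul_right _ (Finset.prod_le_prod' fun q _ => hq q)
      _ ≤ Nat.factorial (n - ∑ q, t q) * ∏ _q : Fin d, Nat.factorial n :=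
          fact_prod n t Finset.univ (by rw [hsumt]; exact hKn)
      _ = Nat.factorial (n - K) * (Nat.factorial n) ^ d := by
          rw [hsumt, Finset.prod_const, Finset.card_univ, Fintype.card_fin]
  have h𝒮card : 𝒮.card = ∏ m, Nat.choose d (k m) := by
    rw [h𝒮, Fintype.card_piFinset]
    exact Finset.prod_congr rfl fun m _ => by
      rw [Finset.card_powersetCard, Finset.card_univ, Fintype.card_fin]
  have hmain : ((Finset.univ.filter fun σ : Fin d → Equiv.Perm (Fin n) =>
        ∀ m : Fin r, sumPermN n d σ (i m) (j m) = k m).card) * Nat.factorial n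
      ≤ (∏ m, Nat.choose d (k m)) * (Nat.factorial (n - K) * (Nat.factorial n) ^ d) := by
    calc ((Finset.univ.filter fun σ : Fin d → Equiv.Perm (Fin n) =>
          ∀ m : Fin r, sumPermN n d σ (i m) (j m) = k m).card) * Nat.factorial n
        ≤ (𝒮.biUnion (fun S => Finset.univ.filter (F S))).card * Nat.factorial n :=
          Nat.mul_le_mul_right _ (Finset.card_le_card hsub)
      _ ≤ (∑ S ∈ 𝒮, (Finset.univ.filter (F S)).card) * Nat.factorial n :=
          Nat.mul_le_mul_right _ Finset.card_biUnion_le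
      _ = ∑ S ∈ 𝒮, (Finset.univ.filter (F S)).card * Nat.factorial n := by
          rw [Finset.sum_mul]
      _ ≤ ∑ _S ∈ 𝒮, Nat.factorial (n - K) * (Nat.factorial n) ^ d :=
          Finset.sum_le_sum hperS
      _ = 𝒮.card * (Nat.factorial (n - K) * (Nat.factorial n) ^ d) := by
          rw [Finset.sum_const, smul_eq_mul]
      _ = (∏ m, Nat.choose d (k m)) * (Nat.factorial (n - K) * (Nat.factorial n) ^ d) := by
          rw [h𝒮card]
  have hnpos : (0 : ℝ) < (Nat.factorial n : ℝ) := by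
    exact_mod_cast Nat.factorial_pos n
  have hpow : (0 : ℝ) < (Nat.factorial n : ℝ) ^ d := pow_pos hnpos d
  have hN : (Fintype.card (Fin d → Equiv.Perm (Fin n)) : ℝ) = (Nat.factorial n : ℝ) ^ d := by
    rw [Fintype.card_fun, Fintype.card_perm, Fintype.card_fin, Fintype.card_fin]
    push_cast; ring
  have goal1 : pr (fun σ : Fin d → Equiv.Perm (Fin n) =>
        ∀ m : Fin r, sumPermN n d σ (i m) (j m) = k m) ≤
      (∏ m : Fin r, (Nat.choose d (k m) : ℝ)) *
        (Nat.factorial (n - K) : ℝ) / (Nat.factorial n : ℝ) := by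
    rw [pr, hN, div_le_div_iff₀ hpow hnpos, Finset.filter_congr_decidable]
    have hmainR : ((Finset.univ.filter fun σ : Fin d → Equiv.Perm (Fin n) =>
          ∀ m : Fin r, sumPermN n d σ (i m) (j m) = k m).card : ℝ) * Nat.factorial n
        ≤ (∏ m : Fin r, (Nat.choose d (k m) : ℝ)) *
          ((Nat.factorial (n - K) : ℝ) * (Nat.factorial n : ℝ) ^ d) := by
      exact_mod_cast hmain
    refine hmainR.trans (le_of_eq (mul_assoc _ _ _).symm)
  refine ⟨goal1, le_trans goal1 ?_⟩
  have hfacpos : (0 : ℝ) < ∏ m : Fin r, (Nat.factorial (k m) : ℝ) :=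
    Finset.prod_pos fun m _ => by exact_mod_cast Nat.factorial_pos (k m)
  have hC : (∏ m : Fin r, (Nat.choose d (k m) : ℝ))
      ≤ (d : ℝ) ^ K / ∏ m : Fin r, (Nat.factorial (k m) : ℝ) := by
    rw [le_div_iff₀ hfacpos]
    have hnat : (∏ m : Fin r, Nat.choose d (k m)) * (∏ m : Fin r, Nat.factorial (k m))
        ≤ d ^ K := by
      rw [← Finset.prod_mul_distrib, ← hK, ← Finset.prod_pow_eq_pow_sum]
      refine Finset.prod_le_prod' fun m _ => ?_
      calc Nat.choose d (k m) * Nat.factorial (k m) = d.descFactorial (k m) := by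
            rw [Nat.descFactorial_eq_factorial_mul_choose]; ring
        _ ≤ d ^ (k m) := Nat.descFactorial_le_pow d (k m)
    exact_mod_cast hnat
  gcongr
end
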